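/- Let Z be a multimatroid, B a basis of Z, and ω a skew class. Then B ∪ ω contains at most one circuit of Z. -/

import Mathlib

open Finset

variable {U ι : Type}

section Defs
variable [DecidableEq U] [Fintype U] [DecidableEq ι] [Fintype ι]

/-- `S` is a subtransversal: it meets each skew class at most once.
Skew classes are the fibers of `cls : U → ι`. -/
def Subtransversal (cls : U → ι) (S : Finset U) : Prop :=
  Set.InjOn cls ↑S

/-- The skew class with index `i`, as a finset. -/
def skewClass (cls : U → ι) (i : ι) : Finset U :=
  Finset.univ.filter (fun x => cls x = i)

/-- `T` is a transversal: it meets each skew class exactly once. -/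
def Transversal (cls : U → ι) (T : Finset U) : Prop :=
  Subtransversal cls T ∧ ∀ i : ι, ∃ x ∈ T, cls x = i

/-- The multimatroid rank axioms for a rank function `r` on the carrier given by
`cls : U → ι` (whose fibers, assumed nonempty, are the skew classes).
The first three fields express axiom (R1) (each transversal carries a matroid),
and `axiomR2` is axiom (R2). -/
structure IsMultimatroid (cls : U → ι) (r : Finset U → ℕ) : Prop where
  cls_surj : Function.Surjective cls
  rank_le_card : ∀ S, Subtransversal cls S → r S ≤ S.card
  mono : ∀ S T, Subtransversal cls T → S ⊆ T → r S ≤ r T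
  submod : ∀ S T, Subtransversal cls (S ∪ T) → r (S ∪ T) + r (S ∩ T) ≤ r S + r T
  axiomR2 : ∀ S, ∀ x y : U, Subtransversal cls S → cls x = cls y → x ≠ y →
    (∀ u ∈ S, cls u ≠ cls x) →
    2 * r S + 1 ≤ r (insert x S) + r (insert y S)

/-- An independent set of the multimatroid. -/
def Indep (cls : U → ι) (r : Finset U → ℕ) (S : Finset U) : Prop :=
  Subtransversal cls S ∧ r S = S.card

/-- A basis: a maximal independent subtransversal. -/
def MMBasis (cls : U → ι) (r : Finset U → ℕ) (B : Finset U) : Prop :=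
  Indep cls r B ∧ ∀ S, Indep cls r S → B ⊆ S → S = B

/-- A circuit: a minimal dependent subtransversal. -/
def Circuit (cls : U → ι) (r : Finset U → ℕ) (C : Finset U) : Prop :=
  Subtransversal cls C ∧ r C < C.card ∧ ∀ D ⊂ C, ¬ r D < D.card

/-- Non-degenerate: every skew class has at least two elements. -/
def Nondegenerate (cls : U → ι) : Prop :=
  ∀ i : ι, 2 ≤ (skewClass cls i).card

/-- An element is singular if its singleton has rank `0`. -/
def Singular (r : Finset U → ℕ) (e : U) : Prop := r {e} = 0

end Defs

section Order
variable [DecidableEq U] [Fintype U] [DecidableEq ι] [Fintype ι] [LinearOrder ι]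

/-- The skew class `i` is active with respect to the transversal `T` (in
particular, with respect to a basis): there is a circuit `C` with
`C − ω_i ⊆ T` whose `≺`-least element lies in the class `i`. -/
def Active (cls : U → ι) (r : Finset U → ℕ) (T : Finset U) (i : ι) : Prop :=
  ∃ C, Circuit cls r C ∧ C \ skewClass cls i ⊆ T ∧
    ∃ m ∈ C, cls m = i ∧ ∀ x ∈ C, i ≤ cls x

end Order

section Aux
variable [DecidableEq U] [Fintype U] [DecidableEq ι] [Fintype ι]
variable {cls : U → ι} {r : Finset U → ℕ}

lemma Subtransversal.mono' {S T : Finset U} (hT : Subtransversal cls T) (h : S ⊆ T) :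
    Subtransversal cls S :=
  Set.InjOn.mono (by exact_mod_cast h) hT

lemma subtrans_insert {S : Finset U} {x : U} (hS : Subtransversal cls S)
    (hx : ∀ u ∈ S, cls u ≠ cls x) : Subtransversal cls (insert x S) := by
  intro a ha b hb hab
  simp only [coe_insert, Set.mem_insert_iff, mem_coe] at ha hb
  rcases ha with rfl | ha <;> rcases hb with rfl | hb
  · rfl
  · exact absurd hab.symm (hx _ hb)
  · exact absurd hab (hx _ ha)
  · exact hS ha hb hab

lemma rank_union_le (hM : IsMultimatroid cls r) (S : Finset U) :
    ∀ A : Finset U, Subtransversal cls (S ∪ A) → r (S ∪ A) ≤ r S + A.card := by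
  intro A
  induction A using Finset.induction_on with
  | empty => intro _; simp
  | insert a A ha ih =>
    intro h
    have he : S ∪ insert a A = (S ∪ A) ∪ {a} := by
      ext y; simp [Finset.mem_union, Finset.mem_insert]
    have hsub : Subtransversal cls ((S ∪ A) ∪ {a}) := by rw [← he]; exact h
    have h1 := hM.submod (S ∪ A) {a} hsub
    have h2 : r {a} ≤ 1 := by
      have := hM.rank_le_card {a} (hsub.mono' (by simp))
      simpa using this
    have h3 := ih (hsub.mono' (Finset.subset_union_left))
    have h4 : (insert a A).card = A.card + 1 := Finset.card_insert_of_notMem ha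
    rw [he]
    omega

lemma indep_of_subset (hM : IsMultimatroid cls r) {B S : Finset U}
    (hB : Subtransversal cls B) (hrB : r B = B.card) (h : S ⊆ B) : r S = S.card := by
  have h0 : S ∪ B \ S = B := Finset.union_sdiff_of_subset h
  have h1 := rank_union_le hM S (B \ S) (by rw [h0]; exact hB)
  rw [h0] at h1
  have h2 := hM.rank_le_card S (hB.mono' h)
  have h3 := Finset.card_sdiff_of_subset h
  have h4 := Finset.card_le_card h
  omega

lemma circuit_rank (hM : IsMultimatroid cls r) {C : Finset U} (hC : Circuit cls r C) :
    r C + 1 = C.card := by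
  obtain ⟨hsub, hlt, hmin⟩ := hC
  have hpos : 0 < C.card := by omega
  obtain ⟨e, he⟩ := Finset.card_pos.mp hpos
  have hss : C.erase e ⊂ C := Finset.erase_ssubset he
  have h1 := hmin _ hss
  have h2 := hM.rank_le_card _ (hsub.mono' (Finset.erase_subset e C))
  have h3 := hM.mono (C.erase e) C hsub (Finset.erase_subset e C)
  have h4 := Finset.card_erase_of_mem he
  omega

lemma circuit_struct (hM : IsMultimatroid cls r) {B C : Finset U} {i : ι}
    (hB : MMBasis cls r B) (hC : Circuit cls r C) (hsub : C ⊆ B ∪ skewClass cls i) :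
    ∃ x ∈ C, cls x = i ∧ x ∉ B ∧ ∀ y ∈ C, y ≠ x → (y ∈ B ∧ cls y ≠ i) := by
  have hnot : ¬ C ⊆ B := by
    intro hCB
    have h1 := indep_of_subset hM hB.1.1 hB.1.2 hCB
    have h2 := hC.2.1
    omega
  obtain ⟨x, hxC, hxB⟩ := Finset.not_subset.mp hnot
  have hxi : cls x = i := by
    rcases Finset.mem_union.mp (hsub hxC) with h | h
    · exact absurd h hxB
    · simpa [skewClass] using h
  refine ⟨x, hxC, hxi, hxB, fun y hyC hyx => ?_⟩
  have hyi : cls y ≠ i := by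
    intro hy
    exact hyx (hC.1 (by exact_mod_cast hyC) (by exact_mod_cast hxC) (hy.trans hxi.symm))
  refine ⟨?_, hyi⟩
  rcases Finset.mem_union.mp (hsub hyC) with h | h
  · exact h
  · exact absurd (by simpa [skewClass] using h) hyi

end Aux

/-- for a basis `B` and a skew class `ω`, the set `B ∪ ω` contains at
most one circuit. -/
theorem stmt_6 [DecidableEq U] [Fintype U] [DecidableEq ι] [Fintype ι]
    (cls : U → ι) (r : Finset U → ℕ) (hM : IsMultimatroid cls r)
    (B : Finset U) (hB : MMBasis cls r B) (i : ι) :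
    ∀ C₁ C₂ : Finset U, Circuit cls r C₁ → Circuit cls r C₂ →
      C₁ ⊆ B ∪ skewClass cls i → C₂ ⊆ B ∪ skewClass cls i → C₁ = C₂ := by
  intro C₁ C₂ hC₁ hC₂ h₁ h₂
  by_contra hne
  obtain ⟨x₁, hx₁C, hx₁i, hx₁B, hkey₁⟩ := circuit_struct hM hB hC₁ h₁
  obtain ⟨x₂, hx₂C, hx₂i, hx₂B, hkey₂⟩ := circuit_struct hM hB hC₂ h₂
  have hr₁ := circuit_rank hM hC₁
  have hr₂ := circuit_rank hM hC₂
  -- neither circuit is contained in the other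
  have hnsub₁ : ¬ C₁ ⊆ C₂ := by
    intro h
    exact hC₂.2.2 C₁ (h.ssubset_of_ne hne) hC₁.2.1
  have hnsub₂ : ¬ C₂ ⊆ C₁ := by
    intro h
    exact hC₁.2.2 C₂ (h.ssubset_of_ne (Ne.symm hne)) hC₂.2.1
  by_cases hx : x₁ = x₂
  · -- same element outside B: use submodularity on C₁, C₂
    subst hx
    have hkey : ∀ y ∈ C₁ ∪ C₂, y ≠ x₁ → (y ∈ B ∧ cls y ≠ i) := by
      intro y hy hyx
      rcases Finset.mem_union.mp hy with h | h
      · exact hkey₁ y h hyx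
      · exact hkey₂ y h hyx
    have hsubU : Subtransversal cls (C₁ ∪ C₂) := by
      intro a ha b hb hab
      simp only [mem_coe] at ha hb
      by_cases hax : a = x₁ <;> by_cases hbx : b = x₁
      · rw [hax, hbx]
      · exact absurd (hab.symm.trans (hax ▸ hx₁i)) (hkey b hb hbx).2
      · exact absurd (hab.trans (hbx ▸ hx₁i)) (hkey a ha hax).2
      · exact hB.1.1 (by exact_mod_cast (hkey a ha hax).1) (by exact_mod_cast (hkey b hb hbx).1) hab
    have hsm := hM.submod C₁ C₂ hsubU
    -- the intersection is independent
    have hint_ss : C₁ ∩ C₂ ⊂ C₁ := by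
      refine Finset.ssubset_iff_subset_ne.mpr ⟨Finset.inter_subset_left, ?_⟩
      intro h
      exact hnsub₁ (Finset.inter_eq_left.mp h)
    have hint_indep : r (C₁ ∩ C₂) = (C₁ ∩ C₂).card := by
      have h1 := hC₁.2.2 _ hint_ss
      have h2 := hM.rank_le_card (C₁ ∩ C₂) (hC₁.1.mono' (Finset.inter_subset_left (s₂ := C₂)))
      omega
    -- the union minus x₁ sits in B, hence is independent
    have hEsub : (C₁ ∪ C₂).erase x₁ ⊆ B := by
      intro y hy
      obtain ⟨hyx, hyU⟩ := Finset.mem_erase.mp hy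
      exact (hkey y hyU hyx).1
    have hE : r ((C₁ ∪ C₂).erase x₁) = ((C₁ ∪ C₂).erase x₁).card :=
      indep_of_subset hM hB.1.1 hB.1.2 hEsub
    have hEle := hM.mono _ _ hsubU (Finset.erase_subset x₁ (C₁ ∪ C₂))
    have hEcard : ((C₁ ∪ C₂).erase x₁).card = (C₁ ∪ C₂).card - 1 :=
      Finset.card_erase_of_mem (Finset.mem_union_left _ hx₁C)
    have hcards := Finset.card_inter_add_card_union C₁ C₂
    have hpos : 0 < (C₁ ∪ C₂).card :=
      Finset.card_pos.mpr ⟨x₁, Finset.mem_union_left _ hx₁C⟩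
    omega
  · -- distinct elements of the skew class: use axiom (R2)
    set S := C₁.erase x₁ ∪ C₂.erase x₂ with hS_def
    have hSB : S ⊆ B := by
      intro y hy
      rcases Finset.mem_union.mp hy with h | h
      · obtain ⟨hyx, hyC⟩ := Finset.mem_erase.mp h
        exact (hkey₁ y hyC hyx).1
      · obtain ⟨hyx, hyC⟩ := Finset.mem_erase.mp h
        exact (hkey₂ y hyC hyx).1
    have hSi : ∀ u ∈ S, cls u ≠ i := by
      intro u hu
      rcases Finset.mem_union.mp hu with h | h
      · obtain ⟨hux, huC⟩ := Finset.mem_erase.mp h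
        exact (hkey₁ u huC hux).2
      · obtain ⟨hux, huC⟩ := Finset.mem_erase.mp h
        exact (hkey₂ u huC hux).2
    have hS : Subtransversal cls S := hB.1.1.mono' hSB
    have hrS : r S = S.card := indep_of_subset hM hB.1.1 hB.1.2 hSB
    have hR2 := hM.axiomR2 S x₁ x₂ hS (hx₁i.trans hx₂i.symm) hx
      (fun u hu => hx₁i ▸ hSi u hu)
    -- bound r (insert xⱼ S) ≤ S.card for j = 1, 2
    have bound : ∀ (C : Finset U) (x : U), Circuit cls r C → x ∈ C → x ∉ B →
        cls x = i → C.erase x ⊆ S → r (insert x S) ≤ S.card := by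
      intro C x hC hxC hxB hxi hCS
      have hrC := circuit_rank hM hC
      have hxS : x ∉ S := fun h => hxB (hSB h)
      have hUeq : C ∪ S = insert x S := by
        conv_lhs => rw [← Finset.insert_erase hxC]
        rw [Finset.insert_union, Finset.union_eq_right.mpr hCS]
      have hIeq : C ∩ S = C.erase x := by
        ext y
        simp only [Finset.mem_inter, Finset.mem_erase]
        constructor
        · rintro ⟨hyC, hyS⟩
          exact ⟨fun h => hxS (h ▸ hyS), hyC⟩
        · rintro ⟨hyx, hyC⟩
          exact ⟨hyC, hCS (Finset.mem_erase.mpr ⟨hyx, hyC⟩)⟩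
      have hsubU : Subtransversal cls (C ∪ S) := by
        rw [hUeq]
        exact subtrans_insert hS (fun u hu => hxi ▸ hSi u hu)
      have hsm := hM.submod C S hsubU
      have hIindep : r (C ∩ S) = (C ∩ S).card := by
        rw [hIeq]
        exact indep_of_subset hM hB.1.1 hB.1.2 (hCS.trans hSB)
      have hIcard : (C ∩ S).card = C.card - 1 := by
        rw [hIeq]; exact Finset.card_erase_of_mem hxC
      have hCpos : 0 < C.card := Finset.card_pos.mpr ⟨x, hxC⟩
      rw [hUeq] at hsm
      omega
    have hb₁ := bound C₁ x₁ hC₁ hx₁C hx₁B hx₁i Finset.subset_union_left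
    have hb₂ := bound C₂ x₂ hC₂ hx₂C hx₂B hx₂i Finset.subset_union_right
    omega
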